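/- arXiv:math/0002185 — 4 statements merged into one kernel-verified Lean document; each statement's English description precedes it below -/
import Mathlib

section
/- Let G be a countable group, E ⊆ G finite, ε > 0, and let u be a positive definite kernel on G with u(s,s) = 1 for all s and |1 − u(s,t)| < ε whenever s t⁻¹ ∈ E. Let ξ_s ∈ ℓ²(G) satisfy ⟨ξ_t, ξ_s⟩ = u(s,t), and set μ_s(t) = |ξ_s(t⁻¹ s)|². Then for every s ∈ E and t ∈ G, ‖s·μ_t − μ_{st}‖₁ ≤ 2√(2ε), where (s·μ_t)(r) = μ_t(s⁻¹ r). -/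
open scoped ComplexOrder

open scoped ENNReal

/-- `u` is a positive definite kernel: every finite matrix `[u (s i) (s j)]` is
positive semidefinite. -/
def IsPosDefKernel {G : Type*} (u : G → G → ℂ) : Prop :=
  ∀ (n : ℕ) (s : Fin n → G), (Matrix.of fun i j => u (s i) (s j)).PosSemidef

theorem mu_almost_invariant {G : Type*} [Group G] [Countable G]
    (E : Finset G) (ε : ℝ) (hε : 0 < ε)
    (u : G → G → ℂ) (hu : IsPosDefKernel u) (hdiag : ∀ s : G, u s s = 1)
    (hE : ∀ s t : G, s * t⁻¹ ∈ E → ‖1 - u s t‖ < ε)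
    (ξ : G → lp (fun _ : G => ℂ) 2)
    (hgram : ∀ s t : G, (inner ℂ (ξ t) (ξ s) : ℂ) = u s t)
    (μ : G → G → ℝ) (hμ : ∀ s t : G, μ s t = ‖ξ s (t⁻¹ * s)‖ ^ 2) :
    ∀ s ∈ E, ∀ t : G,
      (∑' r : G, |μ t (s⁻¹ * r) - μ (s * t) r|) ≤ 2 * Real.sqrt (2 * ε) := by
  intro s hs t
  have hconj : (2 : ℝ≥0∞).toReal.HolderConjugate (2 : ℝ≥0∞).toReal := by
    rw [Real.holderConjugate_iff] <;> norm_num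
  -- each ξ r has norm 1
  have hnorm : ∀ r : G, ‖ξ r‖ = 1 := by
    intro r
    have h1 : (inner ℂ (ξ r) (ξ r) : ℂ) = 1 := by rw [hgram, hdiag]
    rw [inner_self_eq_norm_sq_to_K] at h1
    have h2 : ‖ξ r‖ ^ 2 = (1 : ℝ) := by
      norm_cast at h1
      exact (RCLike.ofReal_inj (K := ℂ)).mp (h1.trans RCLike.ofReal_one.symm)
    nlinarith [norm_nonneg (ξ r)]
  set a := ξ t with ha
  set b := ξ (s * t) with hb
  set f := a - b with hf
  -- distance bound
  have hdist : ‖f‖ ≤ Real.sqrt (2 * ε) := by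
    have h1 : ‖f‖ ^ 2 = 2 - 2 * RCLike.re (u (s * t) t) := by
      rw [hf, norm_sub_sq (𝕜 := ℂ), hnorm, hnorm, hgram]
      ring
    have h2 : ‖(1 : ℂ) - u (s * t) t‖ < ε := by
      apply hE
      simpa using hs
    have h3 : RCLike.re ((1 : ℂ) - u (s * t) t) ≤ ‖(1 : ℂ) - u (s * t) t‖ :=
      RCLike.re_le_norm _
    have h4 : ‖f‖ ^ 2 ≤ 2 * ε := by
      have : RCLike.re ((1 : ℂ) - u (s * t) t)
          = 1 - RCLike.re (u (s * t) t) := by simp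
      nlinarith
    calc ‖f‖ = Real.sqrt (‖f‖ ^ 2) := (Real.sqrt_sq (norm_nonneg _)).symm
      _ ≤ Real.sqrt (2 * ε) := Real.sqrt_le_sqrt h4
  have hfab : ∀ q : G, (f : ∀ _ : G, ℂ) q = a q - b q := by
    intro q
    rw [hf, lp.coeFn_sub, Pi.sub_apply]
  -- change of variable
  have e : G ≃ G := (Equiv.inv G).trans (Equiv.mulLeft (s * t))
  have hre : (∑' r : G, |μ t (s⁻¹ * r) - μ (s * t) r|)
      = ∑' q : G, |‖a q‖ ^ 2 - ‖b q‖ ^ 2| := by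
    rw [← Equiv.tsum_eq ((Equiv.inv G).trans (Equiv.mulLeft (s * t)))
      (fun r => |μ t (s⁻¹ * r) - μ (s * t) r|)]
    refine tsum_congr fun q => ?_
    have h1 : s⁻¹ * (s * t * q⁻¹) = t * q⁻¹ := by group
    have h2 : (t * q⁻¹)⁻¹ * t = q := by group
    have h3 : (s * t * q⁻¹)⁻¹ * (s * t) = q := by group
    simp only [Equiv.trans_apply, Equiv.inv_apply, Equiv.coe_mulLeft,
      hμ, h1, h2, h3]
    rfl
  rw [hre]
  have hSa := lp.tsum_mul_le_mul_norm hconj f a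
  have hSb := lp.tsum_mul_le_mul_norm hconj f b
  have hptwise : ∀ q : G, |‖a q‖ ^ 2 - ‖b q‖ ^ 2|
      ≤ ‖(f : ∀ _ : G, ℂ) q‖ * ‖a q‖ + ‖(f : ∀ _ : G, ℂ) q‖ * ‖b q‖ := by
    intro q
    have h1 : |‖a q‖ - ‖b q‖| ≤ ‖a q - b q‖ := abs_norm_sub_norm_le _ _
    rw [hfab]
    have h2 : |‖a q‖ ^ 2 - ‖b q‖ ^ 2| = |‖a q‖ - ‖b q‖| * (‖a q‖ + ‖b q‖) := by
      rw [← abs_of_nonneg (by positivity : (0:ℝ) ≤ ‖a q‖ + ‖b q‖), ← abs_mul]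
      ring_nf
    rw [h2]
    nlinarith [abs_nonneg (‖a q‖ - ‖b q‖), norm_nonneg (a q), norm_nonneg (b q)]
  have hSsum : Summable fun q => ‖(f : ∀ _ : G, ℂ) q‖ * ‖a q‖
      + ‖(f : ∀ _ : G, ℂ) q‖ * ‖b q‖ := hSa.1.add hSb.1
  calc (∑' q : G, |‖a q‖ ^ 2 - ‖b q‖ ^ 2|)
      ≤ ∑' q : G, (‖(f : ∀ _ : G, ℂ) q‖ * ‖a q‖ + ‖(f : ∀ _ : G, ℂ) q‖ * ‖b q‖) := by
        refine Summable.tsum_le_tsum hptwise ?_ hSsum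
        exact (hSsum.of_nonneg_of_le (fun q => abs_nonneg _) hptwise)
    _ = (∑' q : G, ‖(f : ∀ _ : G, ℂ) q‖ * ‖a q‖)
        + ∑' q : G, ‖(f : ∀ _ : G, ℂ) q‖ * ‖b q‖ := Summable.tsum_add hSa.1 hSb.1
    _ ≤ ‖f‖ * ‖a‖ + ‖f‖ * ‖b‖ := add_le_add hSa.2 hSb.2
    _ = 2 * ‖f‖ := by rw [ha, hb, hnorm, hnorm]; ring
    _ ≤ 2 * Real.sqrt (2 * ε) := by linarith
end

section
/- Let B be a C*-algebra and n ∈ ℕ. The map sending a completely positive map φ : B → Mₙ(ℂ) to the linear functional f_φ on Mₙ(B) defined by f_φ([x_{ij}]) = Σ_{i,j} φ(x_{ij})_{ij} is a bijection between the set of completely positive maps B → Mₙ(ℂ) and the set of positive linear functionals on Mₙ(B). -/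
open scoped ComplexOrder

/-- An element of a C*-algebra is positive iff it is of the form `b* b`. -/
def IsPosElem {A : Type*} [Mul A] [Star A] (a : A) : Prop :=
  ∃ b : A, a = star b * b

/-- A map `φ : B → Mₙ(ℂ)` is completely positive: for every `k`, the amplification
`φ ⊗ id_{M_k}` sends positive matrices over `B` to positive semidefinite matrices. -/
def IsCompletelyPositive {B : Type*} [NonUnitalCStarAlgebra B] {n : ℕ}
    (φ : B → Matrix (Fin n) (Fin n) ℂ) : Prop :=
  IsLinearMap ℂ φ ∧
    ∀ (k : ℕ) (M : Matrix (Fin k) (Fin k) B), IsPosElem M →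
      (Matrix.of fun p q : Fin k × Fin n => (φ (M p.1 q.1)) p.2 q.2).PosSemidef

/-- A positive linear functional on `Mₙ(B)`. -/
def IsPosFunctional {B : Type*} [NonUnitalCStarAlgebra B] {n : ℕ}
    (f : Matrix (Fin n) (Fin n) B → ℂ) : Prop :=
  IsLinearMap ℂ f ∧ ∀ X : Matrix (Fin n) (Fin n) B, 0 ≤ f (star X * X)

section Aux

open Matrix

variable {M : Type*} [NonUnitalRing M] [StarRing M] [Module ℂ M]
  [SMulCommClass ℂ M M] [IsScalarTower ℂ M M] [StarModule ℂ M]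
  {f : M → ℂ}

lemma expand_quad (hf : IsLinearMap ℂ f) (x y : M) (z : ℂ) :
    f (star (x + z • y) * (x + z • y)) =
      f (star x * x) + z * f (star x * y) + (starRingEnd ℂ z) * f (star y * x)
        + (starRingEnd ℂ z * z) * f (star y * y) := by
  have h : star (x + z • y) * (x + z • y) =
      star x * x + z • (star x * y) + (starRingEnd ℂ z) • (star y * x)
        + (starRingEnd ℂ z * z) • (star y * y) := by
    rw [star_add, star_smul]
    simp only [add_mul, mul_add, smul_mul_assoc, mul_smul_comm, smul_smul, smul_add, mul_comm]
    rw [RCLike.star_def]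
    abel
  rw [h, hf.map_add, hf.map_add, hf.map_add, hf.map_smul, hf.map_smul, hf.map_smul,
    smul_eq_mul, smul_eq_mul, smul_eq_mul]

lemma herm_of_pos (hf : IsLinearMap ℂ f) (hpos : ∀ x : M, 0 ≤ f (star x * x))
    (x y : M) : f (star y * x) = starRingEnd ℂ (f (star x * y)) := by
  have him : ∀ w : M, (f (star w * w)).im = 0 := fun w => by
    have := (Complex.le_def.1 (hpos w)).2
    simpa using this.symm
  have h1 := him (x + (1 : ℂ) • y)
  rw [expand_quad hf x y 1] at h1
  have h2 := him (x + Complex.I • y)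
  rw [expand_quad hf x y Complex.I] at h2
  simp only [_root_.map_one, Complex.one_re, Complex.one_im, one_mul, mul_one, Complex.add_im, Complex.mul_im,
    Complex.conj_re, Complex.conj_im, Complex.I_re, Complex.I_im,
    him x, him y, Complex.mul_re] at h1 h2
  apply Complex.ext <;>
    simp only [Complex.conj_re, Complex.conj_im] <;> linarith

lemma gram_posSemidef (hf : IsLinearMap ℂ f) (hpos : ∀ x : M, 0 ≤ f (star x * x))
    {ι : Type*} [Fintype ι] (A : ι → M) :
    (Matrix.of fun p q : ι => f (star (A p) * A q)).PosSemidef := by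
  rw [posSemidef_iff_dotProduct_mulVec]
  constructor
  · ext p q
    rw [Matrix.conjTranspose_apply, Matrix.of_apply, Matrix.of_apply, RCLike.star_def,
      ← herm_of_pos hf hpos]
  · intro v
    have hS : star (∑ q, v q • A q) * (∑ q, v q • A q)
        = ∑ p, ∑ q, (star (v p) * v q) • (star (A p) * A q) := by
      rw [star_sum, Finset.sum_mul]
      refine Finset.sum_congr rfl fun p _ => ?_
      rw [Finset.mul_sum]
      refine Finset.sum_congr rfl fun q _ => ?_
      rw [star_smul, smul_mul_assoc, mul_smul_comm, smul_smul]
    have key : dotProduct (star v)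
          ((Matrix.of fun p q : ι => f (star (A p) * A q)) *ᵥ v)
        = f (star (∑ q, v q • A q) * (∑ q, v q • A q)) := by
      have hfsum : ∀ {α : Type u_2} (s : Finset α) (g : α → M),
          f (∑ a ∈ s, g a) = ∑ a ∈ s, f (g a) := fun s g =>
        map_sum (IsLinearMap.mk' f hf) g s
      simp only [hS, hfsum, hf.map_smul, smul_eq_mul, dotProduct, Matrix.mulVec,
        Pi.star_apply, Matrix.of_apply]
      refine Finset.sum_congr rfl fun p _ => ?_
      rw [Finset.mul_sum]
      refine Finset.sum_congr rfl fun q _ => ?_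
      ring
    rw [key]
    exact hpos _

end Aux


section Main

open Matrix

variable {B : Type*} [NonUnitalCStarAlgebra B] {n : ℕ}

lemma star_stdBasisMatrix (i j : Fin n) (b : B) :
    star (Matrix.single i j b) = Matrix.single j i (star b) := by
  ext a c
  simp only [Matrix.star_apply, Matrix.single, Matrix.of_apply, apply_ite star,
    star_zero, and_comm]

-- f ∘ stdBasisMatrix is linear in b
lemma f_std_linear {f : Matrix (Fin n) (Fin n) B → ℂ} (hf : IsLinearMap ℂ f) (i j : Fin n) :
    IsLinearMap ℂ (fun b : B => f (Matrix.single i j b)) := by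
  constructor
  · intro a b; rw [Matrix.single_add, hf.map_add]
  · intro c b; rw [← Matrix.smul_single, hf.map_smul, smul_eq_mul]

theorem part1 (φ : B → Matrix (Fin n) (Fin n) ℂ) (hφ : IsCompletelyPositive φ) :
    IsPosFunctional (fun X : Matrix (Fin n) (Fin n) B =>
      ∑ i : Fin n, ∑ j : Fin n, (φ (X i j)) i j) := by
  obtain ⟨hlin, hcp⟩ := hφ
  constructor
  · constructor
    · intro X Y
      simp only [Matrix.add_apply, hlin.map_add, Finset.sum_add_distrib]
    · intro c X
      simp only [Matrix.smul_apply, hlin.map_smul, smul_eq_mul, Finset.mul_sum]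
  · intro X
    have hps := hcp n (star X * X) ⟨X, rfl⟩
    set v : Fin n × Fin n → ℂ := fun p => if p.1 = p.2 then 1 else 0 with hv
    have h2 := hps.dotProduct_mulVec_nonneg v
    have key : dotProduct (star v)
        ((Matrix.of fun p q : Fin n × Fin n => (φ ((star X * X) p.1 q.1)) p.2 q.2) *ᵥ v)
        = ∑ i : Fin n, ∑ j : Fin n, (φ ((star X * X) i j)) i j := by
      simp only [dotProduct, Matrix.mulVec, Matrix.of_apply, Pi.star_apply, hv,
        Fintype.sum_prod_type, apply_ite star, star_one, star_zero, ite_mul, one_mul,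
        zero_mul, mul_ite, mul_one, mul_zero]
      simp [Finset.sum_ite_eq, Finset.sum_ite_eq']
    rw [key] at h2
    exact h2

theorem part2 (f : Matrix (Fin n) (Fin n) B → ℂ) (hf : IsPosFunctional f) :
    ∃! φ : B → Matrix (Fin n) (Fin n) ℂ, IsCompletelyPositive φ ∧
      ∀ X : Matrix (Fin n) (Fin n) B,
        f X = ∑ i : Fin n, ∑ j : Fin n, (φ (X i j)) i j := by
  obtain ⟨hlin, hpos⟩ := hf
  classical
  set φ : B → Matrix (Fin n) (Fin n) ℂ :=
    fun b => Matrix.of fun i j => f (Matrix.single i j b) with hφdef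
  have hφlin : IsLinearMap ℂ φ := by
    constructor
    · intro a b; ext i j
      exact (f_std_linear hlin i j).map_add a b
    · intro c b; ext i j
      exact (f_std_linear hlin i j).map_smul c b
  have hsum : ∀ X : Matrix (Fin n) (Fin n) B,
      f X = ∑ i : Fin n, ∑ j : Fin n, (φ (X i j)) i j := by
    intro X
    have hfsum : ∀ {α : Type} (s : Finset α) (g : α → Matrix (Fin n) (Fin n) B),
        f (∑ a ∈ s, g a) = ∑ a ∈ s, f (g a) := fun s g =>
      map_sum (IsLinearMap.mk' f hlin) g s
    conv_lhs => rw [Matrix.matrix_eq_sum_single X]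
    rw [hfsum]
    exact Finset.sum_congr rfl fun i _ => hfsum _ _
  refine ⟨φ, ⟨⟨hφlin, ?_⟩, hsum⟩, ?_⟩
  · -- complete positivity
    rintro k M ⟨Y, rfl⟩
    rcases Nat.eq_zero_or_pos n with hn | hn
    · subst hn
      refine ⟨Matrix.ext fun (p : Fin k × Fin 0) _ => p.2.elim0, fun w => ?_⟩
      ·
        have : (Finset.univ : Finset (Fin k × Fin 0)) = ∅ := by
          ext p; exact Fin.elim0 p.2
        simp [dotProduct, this, Subsingleton.elim w 0]
    · set i₀ : Fin n := ⟨0, hn⟩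
      set A : Fin k → Fin k × Fin n → Matrix (Fin n) (Fin n) B :=
        fun r p => Matrix.single i₀ p.2 (Y r p.1) with hA
      have hmat : (Matrix.of fun p q : Fin k × Fin n => (φ ((star Y * Y) p.1 q.1)) p.2 q.2)
          = ∑ r : Fin k, Matrix.of fun p q : Fin k × Fin n => f (star (A r p) * A r q) := by
        ext p q
        have h1 : (star Y * Y) p.1 q.1 = ∑ r : Fin k, star (Y r p.1) * Y r q.1 := by
          simp [Matrix.mul_apply, Matrix.star_apply]
        have h2 : ∀ r : Fin k, star (A r p) * A r q
            = Matrix.single p.2 q.2 (star (Y r p.1) * Y r q.1) := by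
          intro r
          rw [hA]
          rw [star_stdBasisMatrix, Matrix.single_mul_single_same]
        simp only [Matrix.of_apply, Matrix.sum_apply, h2]
        rw [hφdef]
        simp only [Matrix.of_apply, h1]
        exact map_sum (IsLinearMap.mk' _ (f_std_linear hlin p.2 q.2)) _ _
      rw [hmat]
      refine Finset.sum_induction _ Matrix.PosSemidef
        (fun a b ha hb => ha.add hb) ?_ ?_
      · exact ⟨Matrix.isHermitian_zero, fun w => by simp⟩
      · intro r _
        exact gram_posSemidef hlin hpos (A r)
  · -- uniqueness
    rintro φ' ⟨⟨hlin', _⟩, hsum'⟩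
    funext b
    ext i j
    have h := hsum' (Matrix.single i j b)
    have hz : φ' 0 = 0 := hlin'.map_zero
    simp only [Matrix.single, Matrix.of_apply] at h
    rw [hφdef]
    simp only [Matrix.of_apply]
    rw [show f (Matrix.single i j b) = f (Matrix.of fun i' j' =>
      if i = i' ∧ j = j' then b else 0) from rfl]
    rw [h]
    simp only [apply_ite φ', hz, ite_and]
    rw [Finset.sum_eq_single i, Finset.sum_eq_single j]
    · simp
    · intro j' _ hj'; simp [Ne.symm hj']
    · intro hj; exact absurd (Finset.mem_univ j) hj
    · intro i' _ hi'
      simp [Ne.symm hi']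
    · intro hi; exact absurd (Finset.mem_univ i) hi

end Main

/-- The correspondence `φ ↦ f_φ`, `f_φ([x_{ij}]) = Σ_{i,j} φ(x_{ij})_{ij}`, is a
bijection between completely positive maps `B → Mₙ(ℂ)` and positive linear
functionals on `Mₙ(B)`. -/
theorem cp_posFunctional_correspondence {B : Type*} [NonUnitalCStarAlgebra B] (n : ℕ) :
    (∀ φ : B → Matrix (Fin n) (Fin n) ℂ, IsCompletelyPositive φ →
      IsPosFunctional (fun X : Matrix (Fin n) (Fin n) B =>
        ∑ i : Fin n, ∑ j : Fin n, (φ (X i j)) i j)) ∧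
    (∀ f : Matrix (Fin n) (Fin n) B → ℂ, IsPosFunctional f →
      ∃! φ : B → Matrix (Fin n) (Fin n) ℂ, IsCompletelyPositive φ ∧
        ∀ X : Matrix (Fin n) (Fin n) B,
          f X = ∑ i : Fin n, ∑ j : Fin n, (φ (X i j)) i j) := by
  exact ⟨fun φ hφ => part1 φ hφ, fun f hf => part2 f hf⟩
end

section
/- Condition (ii) of the main theorem implies uniform embeddability: if for every finite E ⊆ G and ε > 0 there exist a finite F ⊆ G and a positive definite kernel u with u(s,s) = 1 for all s, u(s,t) = 0 unless s t⁻¹ ∈ F, and |1 − u(s,t)| < ε whenever s t⁻¹ ∈ E, then for each such u the Gram vectors ξ_s (with ⟨ξ_t, ξ_s⟩ = u(s,t)) satisfy: ‖ξ_s − ξ_t‖² < 2ε whenever s t⁻¹ ∈ E, and ‖ξ_s − ξ_t‖² = 2 whenever s t⁻¹ ∉ F. -/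
open scoped ComplexOrder

/-- Condition (ii) of the main theorem yields a uniform embedding: the Gram vectors
of such a kernel satisfy `‖ξ_s - ξ_t‖² < 2ε` when `s t⁻¹ ∈ E` and
`‖ξ_s - ξ_t‖² = 2` when `s t⁻¹ ∉ F`. -/
theorem condition_ii_uniform_embedding {G : Type*} [Group G] [Countable G]
    (E F : Finset G) (ε : ℝ) (hε : 0 < ε)
    (u : G → G → ℂ) (hu : IsPosDefKernel u) (hdiag : ∀ s : G, u s s = 1)
    (hsupp : ∀ s t : G, s * t⁻¹ ∉ F → u s t = 0)
    (hE : ∀ s t : G, s * t⁻¹ ∈ E → ‖1 - u s t‖ < ε)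
    {H : Type*} [NormedAddCommGroup H] [InnerProductSpace ℂ H]
    (ξ : G → H) (hgram : ∀ s t : G, (inner ℂ (ξ t) (ξ s) : ℂ) = u s t) :
    (∀ s t : G, s * t⁻¹ ∈ E → ‖ξ s - ξ t‖ ^ 2 < 2 * ε) ∧
    ∀ s t : G, s * t⁻¹ ∉ F → ‖ξ s - ξ t‖ ^ 2 = 2 := by
  have hn : ∀ s : G, ‖ξ s‖ ^ 2 = 1 := by
    intro s
    have h := hgram s s
    rw [hdiag] at h
    have := inner_self_eq_norm_sq (𝕜 := ℂ) (ξ s)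
    rw [← this, h]
    simp
  have key : ∀ s t : G, ‖ξ s - ξ t‖ ^ 2 = 2 - 2 * (u s t).re := by
    intro s t
    have h := norm_sub_sq (𝕜 := ℂ) (ξ s) (ξ t)
    rw [h, hn, hn]
    have : (inner ℂ (ξ s) (ξ t) : ℂ) = star (u s t) := by
      rw [← hgram s t, ← inner_conj_symm]
      rfl
    rw [this]
    simp [Complex.conj_re]
    ring
  constructor
  · intro s t hst
    rw [key]
    have h1 : (1 - u s t).re ≤ ‖1 - u s t‖ := Complex.re_le_norm _
    have h2 : (1 - u s t).re = 1 - (u s t).re := by simp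
    have := hE s t hst
    linarith
  · intro s t hst
    rw [key, hsupp s t hst]
    simp
end

section
/- Let x ∈ B(ℓ²(G)) be an operator whose matrix is supported in the tube {(s,t) : s t⁻¹ ∈ F} for a finite subset F ⊆ G. Then x = Σ_{r ∈ F} λ(r) M_{f_r} for functions f_r ∈ ℓ^∞(G) given by f_r(t) = x_{rt, t}, and ‖f_r‖_∞ ≤ ‖x‖. -/
open scoped ComplexOrder ENNReal

section Aux

variable {G : Type*} [Countable G]

lemma aux_two_pos : (0:ℝ) < (2 : ℝ≥0∞).toReal := by norm_num

lemma aux_term_le {c : ℝ} (hc : 0 ≤ c) {g : G → ℂ} (hg : ∀ t, ‖g t‖ ≤ c)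
    (ξ : lp (fun _ : G => ℂ) 2) (t : G) :
    ‖g t * ξ t‖ ^ (2 : ℝ≥0∞).toReal ≤ c ^ (2 : ℝ≥0∞).toReal * ‖ξ t‖ ^ (2 : ℝ≥0∞).toReal := by
  rw [← Real.mul_rpow hc (norm_nonneg _)]
  refine Real.rpow_le_rpow (norm_nonneg _) ?_ aux_two_pos.le
  calc ‖g t * ξ t‖ = ‖g t‖ * ‖ξ t‖ := norm_mul _ _
    _ ≤ c * ‖ξ t‖ := by gcongr; exact hg t

lemma aux_memℓp_mul {c : ℝ} (hc : 0 ≤ c) {g : G → ℂ} (hg : ∀ t, ‖g t‖ ≤ c)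
    (ξ : lp (fun _ : G => ℂ) 2) : Memℓp (fun t => g t * ξ t) 2 := by
  apply memℓp_gen
  have hs : Summable (fun t : G => c ^ (2:ℝ≥0∞).toReal * ‖ξ t‖ ^ (2:ℝ≥0∞).toReal) :=
    ((lp.memℓp ξ).summable aux_two_pos).mul_left _
  exact hs.of_nonneg_of_le (fun t => Real.rpow_nonneg (norm_nonneg _) _)
    fun t => aux_term_le hc hg ξ t

noncomputable def mulCLM {c : ℝ} (hc : 0 ≤ c) {g : G → ℂ} (hg : ∀ t, ‖g t‖ ≤ c) :
    lp (fun _ : G => ℂ) 2 →L[ℂ] lp (fun _ : G => ℂ) 2 :=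
  LinearMap.mkContinuous
    { toFun := fun ξ => ⟨fun t => g t * ξ t, aux_memℓp_mul hc hg ξ⟩
      map_add' := fun ξ η => lp.ext (funext fun t => by
        simp only [lp.coeFn_add, Pi.add_apply]
        exact mul_add _ _ _)
      map_smul' := fun a ξ => lp.ext (funext fun t => by
        simp only [lp.coeFn_smul, Pi.smul_apply, smul_eq_mul, RingHom.id_apply]
        ring) }
    c
    (fun ξ => by
      refine lp.norm_le_of_forall_sum_le aux_two_pos (mul_nonneg hc (norm_nonneg ξ)) fun s => ?_
      calc ∑ t ∈ s, ‖g t * ξ t‖ ^ (2:ℝ≥0∞).toReal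
          ≤ ∑ t ∈ s, c ^ (2:ℝ≥0∞).toReal * ‖ξ t‖ ^ (2:ℝ≥0∞).toReal :=
            Finset.sum_le_sum fun t _ => aux_term_le hc hg ξ t
        _ = c ^ (2:ℝ≥0∞).toReal * ∑ t ∈ s, ‖ξ t‖ ^ (2:ℝ≥0∞).toReal := by
            rw [Finset.mul_sum]
        _ ≤ c ^ (2:ℝ≥0∞).toReal * ‖ξ‖ ^ (2:ℝ≥0∞).toReal := by
            have := Real.rpow_nonneg hc (2:ℝ≥0∞).toReal
            gcongr
            exact lp.sum_rpow_le_norm_rpow aux_two_pos ξ s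
        _ = (c * ‖ξ‖) ^ (2:ℝ≥0∞).toReal := (Real.mul_rpow hc (norm_nonneg _)).symm)

lemma mulCLM_apply {c : ℝ} (hc : 0 ≤ c) {g : G → ℂ} (hg : ∀ t, ‖g t‖ ≤ c)
    (ξ : lp (fun _ : G => ℂ) 2) (t : G) : (mulCLM hc hg ξ) t = g t * ξ t := rfl

end Aux

set_option maxHeartbeats 1000000 in
/-- An operator on `ℓ²(G)` whose matrix is supported in the tube over a finite set `F`
is a finite sum `Σ_{r ∈ F} λ(r) M_{f_r}` with `f_r(t) = x_{rt,t}` and `‖f_r‖_∞ ≤ ‖x‖`. -/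
theorem tube_supported_operator_decomposition {G : Type*} [Group G] [Countable G]
    [DecidableEq G]
    (lam : G → (lp (fun _ : G => ℂ) 2 →L[ℂ] lp (fun _ : G => ℂ) 2))
    (hlam : ∀ (r : G) (ξ : lp (fun _ : G => ℂ) 2) (t : G), (lam r ξ) t = ξ (r⁻¹ * t))
    (F : Finset G) (x : lp (fun _ : G => ℂ) 2 →L[ℂ] lp (fun _ : G => ℂ) 2)
    (hx : ∀ s t : G, s * t⁻¹ ∉ F →
      (inner ℂ (lp.single 2 s (1 : ℂ)) (x (lp.single 2 t (1 : ℂ))) : ℂ) = 0)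
    (f : G → G → ℂ)
    (hf : ∀ r t : G, f r t =
      (inner ℂ (lp.single 2 (r * t) (1 : ℂ)) (x (lp.single 2 t (1 : ℂ))) : ℂ)) :
    (∀ r t : G, ‖f r t‖ ≤ ‖x‖) ∧
    ∃ M : G → (lp (fun _ : G => ℂ) 2 →L[ℂ] lp (fun _ : G => ℂ) 2),
      (∀ (r : G) (ξ : lp (fun _ : G => ℂ) 2) (t : G), (M r ξ) t = f r t * ξ t) ∧
      x = ∑ r ∈ F, lam r ∘L M r := by
  have hsingle : ∀ s : G, ‖(lp.single 2 s (1 : ℂ) : lp (fun _ : G => ℂ) 2)‖ = 1 := by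
    intro s
    have h : ‖lp.single (E := fun _ : G => ℂ) 2 s ((fun _ => (1 : ℂ)) s)‖ = ‖(fun _ => (1 : ℂ)) s‖ :=
      lp.norm_single (E := fun _ : G => ℂ) (p := 2) (by norm_num) s ((fun _ => (1 : ℂ)) s)
    simpa using h
  have hbound : ∀ r t : G, ‖f r t‖ ≤ ‖x‖ := by
    intro r t
    rw [hf]
    calc ‖(inner ℂ (lp.single 2 (r * t) (1 : ℂ)) (x (lp.single 2 t (1 : ℂ))) : ℂ)‖
        ≤ ‖(lp.single 2 (r * t) (1 : ℂ) : lp (fun _ : G => ℂ) 2)‖ * ‖x (lp.single 2 t (1 : ℂ))‖ :=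
          norm_inner_le_norm (𝕜 := ℂ) _ _
      _ ≤ 1 * (‖x‖ * ‖(lp.single 2 t (1 : ℂ) : lp (fun _ : G => ℂ) 2)‖) := by
          rw [hsingle]
          gcongr
          exact x.le_opNorm _
      _ = ‖x‖ := by rw [hsingle]; ring
  refine ⟨hbound, fun r => mulCLM (norm_nonneg x) (hbound r), fun r ξ t => rfl, ?_⟩
  apply ContinuousLinearMap.ext
  intro ξ
  apply lp.ext
  funext s
  -- notation
  have happ : ∀ (η : lp (fun _ : G => ℂ) 2) (u : G),
      (inner ℂ (lp.single 2 u (1 : ℂ)) η : ℂ) = η u := by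
    intro η u
    rw [lp.inner_single_left]
    simp [RCLike.inner_apply]
  set y := ContinuousLinearMap.adjoint x with hy
  have hadj : ∀ u t : G, (y (lp.single 2 u (1 : ℂ))) t =
      starRingEnd ℂ (inner ℂ (lp.single 2 u (1 : ℂ)) (x (lp.single 2 t (1 : ℂ))) : ℂ) := by
    intro u t
    rw [← happ (y (lp.single 2 u (1 : ℂ))) t, hy,
      ContinuousLinearMap.adjoint_inner_right, ← inner_conj_symm]
  have key : (x ξ : ∀ _ : G, ℂ) s = ∑' t : G,
      (inner ℂ (lp.single 2 s (1 : ℂ)) (x (lp.single 2 t (1 : ℂ))) : ℂ) * ξ t := by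
    rw [← happ (x ξ) s, ← ContinuousLinearMap.adjoint_inner_left, lp.inner_eq_tsum]
    congr 1
    funext t
    rw [RCLike.inner_apply, hadj, RingHomInvPair.comp_apply_eq₂, mul_comm]
  have hzero : ∀ t : G, t ∉ F.image (fun r => r⁻¹ * s) →
      (inner ℂ (lp.single 2 s (1 : ℂ)) (x (lp.single 2 t (1 : ℂ))) : ℂ) * ξ t = 0 := by
    intro t ht
    rw [hx s t, zero_mul]
    intro hmem
    exact ht (Finset.mem_image.2 ⟨s * t⁻¹, hmem, by group⟩)
  have keysum : (x ξ : ∀ _ : G, ℂ) s = ∑ r ∈ F,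
      (inner ℂ (lp.single 2 s (1 : ℂ)) (x (lp.single 2 (r⁻¹ * s) (1 : ℂ))) : ℂ) * ξ (r⁻¹ * s) := by
    rw [key, tsum_eq_sum hzero, Finset.sum_image]
    intro a _ b _ hab
    have := mul_right_cancel hab
    exact inv_injective this
  rw [keysum]
  rw [ContinuousLinearMap.sum_apply, lp.coeFn_sum, Finset.sum_apply]
  refine Finset.sum_congr rfl fun r _ => ?_
  rw [ContinuousLinearMap.comp_apply, hlam, mulCLM_apply, hf]
  congr 2
  group
end
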